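/- arXiv:2107.02219 — 2 statements merged into one kernel-verified Lean document; each statement's English description precedes it below -/
import Mathlib

section
/- If f is an S_n-invariant Laurent polynomial in x_1,...,x_n (n ≥ 2) such that f|_{x_{n-1}=t, x_n=-t} = 0 identically, then f is divisible by the product ∏_{i<j} (x_i + x_j) in the ring of Laurent polynomials. -/
/-- Laurent polynomials in `n` variables over `ℚ`. -/
abbrev LP (n : ℕ) : Type := AddMonoidAlgebra ℚ (Fin n →₀ ℤ)

/-- Evaluation of a Laurent polynomial at a point with invertible coordinates. -/
noncomputable def lpEval {n : ℕ} (x : Fin n → ℚˣ) (f : LP n) : ℚ :=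
  Finsupp.sum f.coeff fun d c => c * ∏ i, ((x i ^ (d i) : ℚˣ) : ℚ)

/-- `f` is symmetric (invariant under the `Sₙ`-action permuting the variables). -/
def IsSymmLP {n : ℕ} (f : LP n) : Prop :=
  ∀ (σ : Equiv.Perm (Fin n)) (x : Fin n → ℚˣ), lpEval (x ∘ σ) f = lpEval x f

/-- The point obtained by substituting `x i = t`, `x j = -t`, others given by `y`. -/
def substPair {n : ℕ} (i j : Fin n) (t : ℚˣ) (y : Fin n → ℚˣ) : Fin n → ℚˣ :=
  fun k => if k = i then t else if k = j then -t else y k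

/-- The variable `xᵢ` as a Laurent polynomial. -/
noncomputable def Xv {n : ℕ} (i : Fin n) : LP n :=
  AddMonoidAlgebra.single (Finsupp.single i (1 : ℤ)) (1 : ℚ)

noncomputable def chihom {n : ℕ} (d : Fin n →₀ ℤ) : (Fin n → ℚˣ) →* ℚ where
  toFun x := ∏ i, ((x i ^ (d i) : ℚˣ) : ℚ)
  map_one' := by simp
  map_mul' x y := by
    simp only [Pi.mul_apply, mul_zpow, Units.val_mul, ← Finset.prod_mul_distrib]

lemma chihom_inj {n : ℕ} : Function.Injective (chihom (n := n)) := by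
  intro d e h
  ext i
  have h2 := DFunLike.congr_fun h (fun k => if k = i then (Units.mk0 (2:ℚ) (by norm_num)) else 1)
  simp only [chihom, MonoidHom.coe_mk, OneHom.coe_mk] at h2
  rw [Finset.prod_eq_single i (by intro b _ hb; simp [hb]) (by simp),
      Finset.prod_eq_single i (by intro b _ hb; simp [hb]) (by simp)] at h2
  simp only [if_pos rfl] at h2
  have h3 : ((2:ℚ)) ^ (d i) = (2:ℚ) ^ (e i) := by
    simpa [Units.val_zpow_eq_zpow_val] using h2
  exact zpow_right_injective₀ (by norm_num) (by norm_num) h3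

lemma lp_eq_zero_of_eval {n : ℕ} (f : LP n) (h : ∀ x, lpEval x f = 0) : f = 0 := by
  have li := (linearIndependent_monoidHom (Fin n → ℚˣ) ℚ).comp chihom chihom_inj
  refine AddMonoidAlgebra.coeff_injective (linearIndependent_iff.mp li f.coeff ?_)
  funext x
  rw [Finsupp.linearCombination_apply, Finsupp.sum_apply']
  simpa [chihom, lpEval, Finsupp.sum] using h x

noncomputable def esub {n : ℕ} (i j : Fin n) : (Fin n →₀ ℤ) →+ (Fin n →₀ ℤ) where
  toFun d := d + Finsupp.single i (d j) - Finsupp.single j (d j)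
  map_zero' := by simp
  map_add' d e := by
    simp only [Finsupp.add_apply, Finsupp.single_add]
    abel

lemma esub_apply_i {n : ℕ} {i j : Fin n} (hij : i ≠ j) (d : Fin n →₀ ℤ) :
    esub i j d i = d i + d j := by
  simp [esub, Finsupp.single_apply, hij, hij.symm]

lemma esub_apply_j {n : ℕ} {i j : Fin n} (hij : i ≠ j) (d : Fin n →₀ ℤ) :
    esub i j d j = 0 := by
  simp [esub, Finsupp.single_apply, hij, hij.symm]

lemma esub_apply_other {n : ℕ} {i j k : Fin n} (hki : k ≠ i) (hkj : k ≠ j) (d : Fin n →₀ ℤ) :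
    esub i j d k = d k := by
  simp [esub, Finsupp.single_apply, hki.symm, hkj.symm]

lemma esub_of_zero {n : ℕ} {i j : Fin n} (d : Fin n →₀ ℤ) (h : d j = 0) : esub i j d = d := by
  simp [esub, h]

lemma esub_single_j {n : ℕ} {i j : Fin n} : esub i j (Finsupp.single j 1) = Finsupp.single i 1 := by
  simp [esub]

noncomputable def epsM {n : ℕ} (i j : Fin n) : Multiplicative (Fin n →₀ ℤ) →* LP n where
  toFun d := ((-1 : ℚ) ^ ((Multiplicative.toAdd d) j)) •
      AddMonoidAlgebra.single (esub i j (Multiplicative.toAdd d)) (1:ℚ)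
  map_one' := by
    simp [AddMonoidAlgebra.one_def]
  map_mul' d e := by
    simp only [toAdd_mul, Finsupp.add_apply, map_add, smul_mul_smul_comm,
      AddMonoidAlgebra.single_mul_single, mul_one]
    rw [zpow_add₀ (by norm_num : (-1:ℚ) ≠ 0)]

noncomputable def eps {n : ℕ} (i j : Fin n) : LP n →ₐ[ℚ] LP n :=
  AddMonoidAlgebra.lift ℚ _ _ (epsM i j)

lemma eps_single {n : ℕ} (i j : Fin n) (d : Fin n →₀ ℤ) (c : ℚ) :
    eps i j (AddMonoidAlgebra.single d c)
      = (c * (-1:ℚ) ^ (d j)) • AddMonoidAlgebra.single (esub i j d) (1:ℚ) := by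
  rw [eps, AddMonoidAlgebra.lift_single]
  simp [epsM, smul_smul]

noncomputable def Uv {n : ℕ} (i : Fin n) : (LP n)ˣ where
  val := AddMonoidAlgebra.single (Finsupp.single i 1) 1
  inv := AddMonoidAlgebra.single (-Finsupp.single i 1) 1
  val_inv := by rw [AddMonoidAlgebra.single_mul_single]; simp [AddMonoidAlgebra.one_def]
  inv_val := by rw [AddMonoidAlgebra.single_mul_single]; simp [AddMonoidAlgebra.one_def]

lemma Uv_zpow {n : ℕ} (i : Fin n) (m : ℤ) :
    ((Uv i ^ m : (LP n)ˣ) : LP n) = AddMonoidAlgebra.single (Finsupp.single i m) 1 := by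
  induction m using Int.induction_on with
  | zero => simp [AddMonoidAlgebra.one_def]
  | succ k ih =>
      rw [zpow_add_one, Units.val_mul, ih]
      show AddMonoidAlgebra.single (Finsupp.single i (k:ℤ)) 1 *
          AddMonoidAlgebra.single (Finsupp.single i (1:ℤ)) 1
        = AddMonoidAlgebra.single (Finsupp.single i (k+1:ℤ)) 1
      rw [AddMonoidAlgebra.single_mul_single]
      simp [Finsupp.single_add]
  | pred k ih =>
      rw [zpow_sub_one, Units.val_mul, ih]
      show _ = AddMonoidAlgebra.single (Finsupp.single i (-k-1:ℤ)) 1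
      show AddMonoidAlgebra.single (Finsupp.single i (-k:ℤ)) 1 *
          AddMonoidAlgebra.single (-Finsupp.single i (1:ℤ)) 1
        = AddMonoidAlgebra.single (Finsupp.single i (-k-1:ℤ)) 1
      rw [AddMonoidAlgebra.single_mul_single]
      congr 1
      rw [← Finsupp.single_neg]
      rw [← Finsupp.single_add]
      congr 1
      ring

lemma negUv_val {n : ℕ} (i : Fin n) :
    ((-Uv i : (LP n)ˣ) : LP n) = -(AddMonoidAlgebra.single (Finsupp.single i 1) 1) := rfl

lemma negUv_inv_val {n : ℕ} (i : Fin n) :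
    (((-Uv i)⁻¹ : (LP n)ˣ) : LP n) = -(AddMonoidAlgebra.single (-Finsupp.single i 1) 1) := by
  rw [inv_neg]; rfl

lemma negUv_zpow {n : ℕ} (i : Fin n) (m : ℤ) :
    (((-Uv i) ^ m : (LP n)ˣ) : LP n)
      = ((-1:ℚ)^m) • AddMonoidAlgebra.single (Finsupp.single i m) 1 := by
  induction m using Int.induction_on with
  | zero => simp [AddMonoidAlgebra.one_def]
  | succ k ih =>
      rw [zpow_add_one, Units.val_mul, ih, negUv_val,
        zpow_add_one₀ (by norm_num : (-1:ℚ) ≠ 0), mul_neg, smul_mul_assoc,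
        AddMonoidAlgebra.single_mul_single, mul_one, ← Finsupp.single_add]
      rw [mul_neg_one, neg_smul]
  | pred k ih =>
      rw [zpow_sub_one, Units.val_mul, ih, negUv_inv_val,
        zpow_sub_one₀ (by norm_num : (-1:ℚ) ≠ 0), mul_neg, smul_mul_assoc,
        AddMonoidAlgebra.single_mul_single, mul_one]
      have h1 : (-1:ℚ)⁻¹ = -1 := by norm_num
      have h2 : Finsupp.single i (-k:ℤ) + (-Finsupp.single i (1:ℤ)) = Finsupp.single i (-k-1:ℤ) := by
        rw [← Finsupp.single_neg, ← Finsupp.single_add, sub_eq_add_neg]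
      rw [h1, h2, mul_neg_one, neg_smul]


lemma unit_sub_dvd {R : Type*} [CommRing R] (u v : Rˣ) (m : ℤ) :
    ((u:R) - v) ∣ ((u^m : Rˣ) : R) - ((v^m : Rˣ) : R) := by
  rcases m with k | k
  · simpa using sub_dvd_pow_sub_pow (u:R) v k
  · have h1 : (u*v)^(Int.negSucc k) * v^(k+1) = u^(Int.negSucc k) := by
      simp only [zpow_negSucc, mul_pow, mul_inv]
      group
    have h2 : (u*v)^(Int.negSucc k) * u^(k+1) = v^(Int.negSucc k) := by
      rw [mul_comm u v]
      simp only [zpow_negSucc, mul_pow, mul_inv]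
      group
    have key : ((u ^ (Int.negSucc k) : Rˣ) : R) - ((v ^ (Int.negSucc k) : Rˣ) : R)
        = (((u*v) ^ (Int.negSucc k) : Rˣ) : R) * (((v^(k+1) : Rˣ) : R) - ((u^(k+1) : Rˣ) : R)) := by
      rw [mul_sub, ← Units.val_mul, ← Units.val_mul, h1, h2]
    rw [key]
    apply Dvd.dvd.mul_left
    have := sub_dvd_pow_sub_pow (u:R) v (k+1)
    simpa [Units.val_pow_eq_pow_val] using (dvd_neg.mpr this)

lemma Uv_val {n : ℕ} (i : Fin n) :
    ((Uv i : (LP n)ˣ) : LP n) = Xv i := rfl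

lemma eps_dvd_sub {n : ℕ} {i j : Fin n} (hij : i ≠ j) (g : LP n) :
    (Xv i + Xv j) ∣ (g - eps i j g) := by
  induction g using AddMonoidAlgebra.induction with
  | zero => simp
  | single_add d c g hd hc ih =>
      set S : LP n := AddMonoidAlgebra.single d c with hS
      set G : LP n := g with hG
      show (Xv i + Xv j) ∣ ((S + G) - eps i j (S + G))
      have hadd : (S + G) - eps i j (S + G)
          = (S - eps i j S) + (G - eps i j G) := by
        rw [map_add]; ring
      rw [hadd]
      refine dvd_add ?_ ih
      -- single case
      set m := d j with hm
      have key : S - eps i j S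
          = (c • AddMonoidAlgebra.single (d - Finsupp.single j m) 1) *
            (((Uv j ^ m : (LP n)ˣ) : LP n) - (((-Uv i) ^ m : (LP n)ˣ) : LP n)) := by
        rw [eps_single, Uv_zpow, negUv_zpow, mul_sub, smul_mul_assoc, smul_mul_assoc,
          AddMonoidAlgebra.single_mul_single, one_mul]
        rw [mul_smul_comm, AddMonoidAlgebra.single_mul_single, one_mul, smul_smul]
        have h3 : (d - Finsupp.single j m) + Finsupp.single j m = d := by abel
        have h4 : (d - Finsupp.single j m) + Finsupp.single i m = esub i j d := by
          simp only [esub, AddMonoidHom.coe_mk, ZeroHom.coe_mk, ← hm]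
          abel
        rw [h3, h4, hS]
        simp [AddMonoidAlgebra.smul_single', hm]
      rw [key]
      apply Dvd.dvd.mul_left
      have := unit_sub_dvd (Uv j) (-Uv i) m
      have hval : ((Uv j : (LP n)ˣ) : LP n) - ((-Uv i : (LP n)ˣ) : LP n) = Xv i + Xv j := by
        rw [Uv_val, negUv_val]
        show Xv j - -(Xv i) = Xv i + Xv j
        ring
      rwa [hval] at this

lemma eps_zero_dvd {n : ℕ} {i j : Fin n} (hij : i ≠ j) {g : LP n} (h : eps i j g = 0) :
    (Xv i + Xv j) ∣ g := by
  have := eps_dvd_sub hij g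
  rwa [h, sub_zero] at this

lemma lpEval_zero {n : ℕ} (x : Fin n → ℚˣ) : lpEval x (0 : LP n) = 0 :=
  Finsupp.sum_zero_index

lemma lpEval_single {n : ℕ} (x : Fin n → ℚˣ) (d : Fin n →₀ ℤ) (c : ℚ) :
    lpEval x (AddMonoidAlgebra.single d c) = c * ∏ i, ((x i ^ (d i) : ℚˣ) : ℚ) :=
  Finsupp.sum_single_index (by simp)

lemma lpEval_add {n : ℕ} (x : Fin n → ℚˣ) (g h : LP n) :
    lpEval x (g + h) = lpEval x g + lpEval x h := by
  unfold lpEval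
  apply Finsupp.sum_add_index'
  · intro d; simp
  · intro d c1 c2; ring

lemma lpEval_eps {n : ℕ} {i j : Fin n} (hij : i ≠ j) (x : Fin n → ℚˣ) (g : LP n) :
    lpEval x (eps i j g) = lpEval (substPair i j (x i) x) g := by
  induction g using AddMonoidAlgebra.induction with
  | zero => rw [map_zero]; rw [lpEval_zero, lpEval_zero]
  | single_add d c g hd hc ih =>
      set S : LP n := AddMonoidAlgebra.single d c with hS
      set G : LP n := g with hG
      show lpEval x (eps i j (S + G)) = lpEval (substPair i j (x i) x) (S + G)
      rw [map_add, lpEval_add, lpEval_add, ih]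
      congr 1
      -- single case
      set m := d j with hm
      set z := substPair i j (x i) x with hz
      rw [eps_single, AddMonoidAlgebra.smul_single', mul_one, lpEval_single, hS, lpEval_single]
      rw [mul_assoc]
      congr 1
      -- now the product identity
      have hzi : z i = x i := by simp [hz, substPair]
      have hzj : z j = -(x i) := by simp [hz, substPair, hij.symm]
      have hji : j ∈ (Finset.univ.erase i) := Finset.mem_erase.mpr ⟨hij.symm, Finset.mem_univ j⟩
      rw [← Finset.mul_prod_erase Finset.univ _ (Finset.mem_univ i),
          ← Finset.mul_prod_erase _ _ hji,
          ← Finset.mul_prod_erase Finset.univ (fun k => ((z k ^ (d k) : ℚˣ) : ℚ)) (Finset.mem_univ i),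
          ← Finset.mul_prod_erase _ (fun k => ((z k ^ (d k) : ℚˣ) : ℚ)) hji]
      have hrest : ∏ k ∈ (Finset.univ.erase i).erase j, ((x k ^ (esub i j d k) : ℚˣ) : ℚ)
          = ∏ k ∈ (Finset.univ.erase i).erase j, ((z k ^ (d k) : ℚˣ) : ℚ) := by
        apply Finset.prod_congr rfl
        intro k hk
        have hkj : k ≠ j := (Finset.mem_erase.mp hk).1
        have hki : k ≠ i := (Finset.mem_erase.mp (Finset.mem_erase.mp hk).2).1
        rw [esub_apply_other hki hkj]
        have : z k = x k := by simp [hz, substPair, hki, hkj]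
        rw [this]
      rw [hrest, hzi, hzj, esub_apply_i hij, esub_apply_j hij, ← hm]
      simp only [Units.val_zpow_eq_zpow_val, Units.val_neg]
      set a : ℚ := (x i : ℚ) with ha
      have ha0 : a ≠ 0 := Units.ne_zero _
      have hneg : (-a)^m = (-1:ℚ)^m * a^m := by rw [← neg_one_mul, mul_zpow]
      rw [zpow_add₀ ha0, hneg, zpow_zero]
      ring


lemma exists_perm {n : ℕ} {i j a b : Fin n} (hij : i ≠ j) (hab : a ≠ b) :
    ∃ σ : Equiv.Perm (Fin n), σ i = a ∧ σ j = b := by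
  classical
  set j' := Equiv.swap i a j with hj'
  have hj'a : j' ≠ a := by
    intro h
    have : Equiv.swap i a j = Equiv.swap i a i := by rw [← hj', h, Equiv.swap_apply_left]
    exact hij ((Equiv.swap i a).injective this.symm)
  refine ⟨(Equiv.swap i a).trans (Equiv.swap j' b), ?_, ?_⟩
  · simp only [Equiv.trans_apply, Equiv.swap_apply_left]
    exact Equiv.swap_apply_of_ne_of_ne hj'a.symm hab
  · simp only [Equiv.trans_apply, ← hj', Equiv.swap_apply_left]

lemma substPair_comp {n : ℕ} {i j a b : Fin n} (hij : i ≠ j) (hab : a ≠ b)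
    (σ : Equiv.Perm (Fin n)) (hi : σ i = a) (hj : σ j = b) (t : ℚˣ) (y : Fin n → ℚˣ) :
    (substPair a b t (y ∘ σ.symm)) ∘ σ = substPair i j t y := by
  funext k
  by_cases hk : k = i
  · subst hk
    simp [substPair, hi]
  · by_cases hk2 : k = j
    · subst hk2
      simp [substPair, hj, hab.symm, hk]
    · have h1 : σ k ≠ a := by rw [← hi]; exact fun h => hk (σ.injective h)
      have h2 : σ k ≠ b := by rw [← hj]; exact fun h => hk2 (σ.injective h)
      simp [substPair, h1, h2, hk, hk2]

lemma eps_f_zero {n : ℕ} (hn : 2 ≤ n) (f : LP n) (hsymm : IsSymmLP f)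
    (hzero : ∀ (t : ℚˣ) (y : Fin n → ℚˣ),
      lpEval (substPair (⟨n - 2, Nat.sub_lt (lt_of_lt_of_le zero_lt_two hn) zero_lt_two⟩ : Fin n) (⟨n - 1, Nat.sub_lt (lt_of_lt_of_le zero_lt_two hn) zero_lt_one⟩ : Fin n) t y) f = 0)
    {i j : Fin n} (hij : i ≠ j) : eps i j f = 0 := by
  set a : Fin n := ⟨n - 2, Nat.sub_lt (lt_of_lt_of_le zero_lt_two hn) zero_lt_two⟩ with ha
  set b : Fin n := ⟨n - 1, Nat.sub_lt (lt_of_lt_of_le zero_lt_two hn) zero_lt_one⟩ with hb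
  have hab : a ≠ b := by
    intro h
    have := Fin.val_eq_of_eq h
    simp [ha, hb] at this
    omega
  apply lp_eq_zero_of_eval
  intro x
  rw [lpEval_eps hij]
  obtain ⟨σ, hi, hj⟩ := exists_perm hij hab
  rw [← substPair_comp hij hab σ hi hj (x i) x]
  rw [hsymm σ]
  exact hzero (x i) (x ∘ σ.symm)

lemma eps_Xv_ne {n : ℕ} (i j k : Fin n) (hk : k ≠ j) : eps i j (Xv k) = Xv k := by
  rw [Xv, eps_single]
  have h1 : (Finsupp.single k (1:ℤ)) j = 0 := Finsupp.single_eq_of_ne' hk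
  rw [h1, esub_of_zero _ h1]
  norm_num

lemma eps_Xv_eq {n : ℕ} (i j : Fin n) : eps i j (Xv j) = -Xv i := by
  rw [Xv, eps_single]
  have h1 : (Finsupp.single j (1:ℤ)) j = 1 := Finsupp.single_eq_same
  rw [h1, esub_single_j]
  norm_num [Xv]

lemma Xv_comb_ne_zero {n : ℕ} {a b : Fin n} (hab : a ≠ b) (d2 : ℚ) :
    Xv a + d2 • Xv b ≠ 0 := by
  intro h
  have hne : (Finsupp.single b (1:ℤ)) ≠ Finsupp.single a 1 :=
    fun h' => hab (Finsupp.single_left_injective one_ne_zero h').symm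
  have h2 := Finsupp.ext_iff.mp (congrArg AddMonoidAlgebra.coeff h) (Finsupp.single a 1)
  classical
  rw [AddMonoidAlgebra.coeff_add, AddMonoidAlgebra.coeff_smul, Finsupp.add_apply, Finsupp.smul_apply] at h2
  have hXa : (Xv a : LP n).coeff (Finsupp.single a (1:ℤ)) = 1 := by
    show (Finsupp.single (Finsupp.single a (1:ℤ)) (1:ℚ)) (Finsupp.single a 1) = 1
    exact Finsupp.single_eq_same
  have hXb : (Xv b : LP n).coeff (Finsupp.single a (1:ℤ)) = 0 := by
    show (Finsupp.single (Finsupp.single b (1:ℤ)) (1:ℚ)) (Finsupp.single a 1) = 0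
    exact Finsupp.single_eq_of_ne' hne
  rw [hXa, hXb] at h2
  simp at h2

lemma prod_pairs_dvd {n : ℕ} (s : Finset (Fin n × Fin n)) (f : LP n)
    (hlt : ∀ p ∈ s, p.1 < p.2)
    (hz : ∀ p ∈ s, eps p.1 p.2 f = 0) :
    (∏ p ∈ s, (Xv p.1 + Xv p.2)) ∣ f := by
  classical
  induction s using Finset.induction_on generalizing f with
  | empty => simp
  | @insert p s hps ih =>
      have hplt : p.1 < p.2 := hlt p (Finset.mem_insert_self p s)
      have hpne : p.1 ≠ p.2 := ne_of_lt hplt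
      have hdvd : (Xv p.1 + Xv p.2) ∣ f :=
        eps_zero_dvd hpne (hz p (Finset.mem_insert_self p s))
      obtain ⟨q, hq⟩ := hdvd
      have hq' : ∀ r ∈ s, eps r.1 r.2 q = 0 := by
        intro r hr
        have hrlt : r.1 < r.2 := hlt r (Finset.mem_insert_of_mem hr)
        have hrne : r.1 ≠ r.2 := ne_of_lt hrlt
        have hrp : r ≠ p := fun h => hps (h ▸ hr)
        have hrz := hz r (Finset.mem_insert_of_mem hr)
        rw [hq, map_mul] at hrz
        have hL : eps r.1 r.2 (Xv p.1 + Xv p.2) ≠ 0 := by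
          rw [map_add]
          by_cases h1 : p.1 = r.2
          · -- Xv p.1 ↦ -Xv r.1
            have h2 : p.2 ≠ r.2 := by rw [← h1]; exact ne_of_gt hplt
            rw [h1, eps_Xv_eq, eps_Xv_ne _ _ _ h2]
            have h3 : p.2 ≠ r.1 := by
              intro h
              have : r.1 < r.2 := hrlt
              rw [← h, ← h1] at this
              exact absurd hplt (by omega)
            have := Xv_comb_ne_zero h3 (-1 : ℚ)
            rw [neg_one_smul] at this
            intro hcon
            exact this (by linear_combination hcon)
          · by_cases h2 : p.2 = r.2
            · have h3 : p.1 ≠ r.1 := by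
                intro h
                exact hrp (Prod.ext h h2).symm
              rw [h2, eps_Xv_eq, eps_Xv_ne _ _ _ h1]
              have := Xv_comb_ne_zero h3 (-1 : ℚ)
              rw [neg_one_smul] at this
              intro hcon
              exact this (by linear_combination hcon)
            · rw [eps_Xv_ne _ _ _ h1, eps_Xv_ne _ _ _ h2]
              have := Xv_comb_ne_zero hpne (1 : ℚ)
              rw [one_smul] at this
              exact this
        exact (mul_eq_zero.mp hrz).resolve_left hL
      have hdq := ih q (fun r hr => hlt r (Finset.mem_insert_of_mem hr)) hq'
      rw [Finset.prod_insert hps, hq]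
      exact mul_dvd_mul dvd_rfl hdq

/-- If f is an Sₙ-invariant Laurent polynomial (n ≥ 2) whose
evaluation at x_{n-1} = t, x_n = -t is identically zero, then f is divisible by
∏_{i<j} (x_i + x_j) in the ring of Laurent polynomials. -/
theorem dvd_of_eval_zero (n : ℕ) (hn : 2 ≤ n) (f : LP n)
    (hsymm : IsSymmLP f)
    (hzero : ∀ (t : ℚˣ) (y : Fin n → ℚˣ),
      lpEval (substPair ⟨n - 2, by omega⟩ ⟨n - 1, by omega⟩ t y) f = 0) :
    (∏ p ∈ Finset.univ.filter (fun p : Fin n × Fin n => p.1 < p.2),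
      (Xv p.1 + Xv p.2)) ∣ f := by
  apply prod_pairs_dvd
  · intro p hp
    exact (Finset.mem_filter.mp hp).2
  · intro p hp
    have hlt := (Finset.mem_filter.mp hp).2
    exact eps_f_zero hn f hsymm hzero (ne_of_lt hlt)
end

section
/- Let λ ∈ Z^n be a weight with λ_1 ≥ ... ≥ λ_n and such that λ_i = λ_{i+1} implies λ_i = 0 (a strict partition with possible zeros). The Schur P-function p_{λ,n} = Σ_{w ∈ S_n/S_λ} w( x^λ ∏_{i<j, λ_i>λ_j} (1 + x_i^{-1}x_j)/(1 - x_i^{-1}x_j) ), where S_λ is the stabilizer of λ, is an S_n-invariant Laurent polynomial (in particular, all the denominators cancel). -/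
/-- The value at x of the defining rational expression of the Schur P-function
p_{λ,n} = Σ_{w ∈ Sₙ/S_λ} w( x^λ ∏_{i<j, λᵢ>λⱼ} (1+xᵢ⁻¹xⱼ)/(1-xᵢ⁻¹xⱼ) ).
Since the summand depends only on the coset w·S_λ, the sum over coset
representatives equals the sum over all of Sₙ divided by |S_λ|. -/
noncomputable def schurPVal (n : ℕ) (lam : Fin n → ℤ) (x : Fin n → ℚˣ) : ℚ :=
  ((Fintype.card {σ : Equiv.Perm (Fin n) // ∀ i, lam (σ i) = lam i} : ℚ))⁻¹ *
  ∑ σ : Equiv.Perm (Fin n),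
    (∏ i, ((x (σ i) ^ (lam i) : ℚˣ) : ℚ)) *
    ∏ p ∈ Finset.univ.filter
        (fun p : Fin n × Fin n => p.1 < p.2 ∧ lam p.2 < lam p.1),
      (1 + ((x (σ p.1) : ℚ))⁻¹ * (x (σ p.2) : ℚ)) /
      (1 - ((x (σ p.1) : ℚ))⁻¹ * (x (σ p.2) : ℚ))


namespace SchurPAux
open MvPolynomial Equiv Finset

noncomputable section

variable {n : ℕ}

abbrev MP (n : ℕ) := MvPolynomial (Fin n) ℚ

def Pairs (n : ℕ) : Finset (Fin n × Fin n) := Finset.univ.filter fun q => q.1 < q.2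
def PS (lam : Fin n → ℤ) : Finset (Fin n × Fin n) :=
  Finset.univ.filter fun p => p.1 < p.2 ∧ lam p.2 < lam p.1
def srt (σ : Perm (Fin n)) (q : Fin n × Fin n) : Fin n × Fin n :=
  if σ q.1 < σ q.2 then (σ q.1, σ q.2) else (σ q.2, σ q.1)
def sg (σ : Perm (Fin n)) (q : Fin n × Fin n) : ℚ := if σ q.1 < σ q.2 then 1 else -1
def Lq (q : Fin n × Fin n) : MP n := X q.1 - X q.2
def eps (lam : Fin n → ℤ) (σ : Perm (Fin n)) : ℚ := ∏ p ∈ PS lam, sg σ p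
def Qs (lam : Fin n → ℤ) (σ : Perm (Fin n)) : Finset (Fin n × Fin n) := (PS lam).image (srt σ)
def Mc (lam : Fin n → ℤ) : ℤ := ∑ i, |lam i|
def mexp (lam : Fin n → ℤ) (i : Fin n) : ℕ := (lam i + Mc lam).toNat
def Ap (lam : Fin n → ℤ) (σ : Perm (Fin n)) : MP n := ∏ i, X (σ i) ^ (mexp lam i)
def Up (lam : Fin n → ℤ) (σ : Perm (Fin n)) : MP n := ∏ p ∈ PS lam, (X (σ p.1) + X (σ p.2))
def Wp (lam : Fin n → ℤ) (σ : Perm (Fin n)) : MP n := ∏ p ∈ PS lam, (X (σ p.1) - X (σ p.2))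
def Rp (lam : Fin n → ℤ) (σ : Perm (Fin n)) : MP n := ∏ q ∈ Pairs n \ Qs lam σ, Lq q
def Dl (n : ℕ) : MP n := ∏ q ∈ Pairs n, Lq q
def Np (lam : Fin n → ℤ) : MP n :=
  ∑ σ : Perm (Fin n), C (eps lam σ) * (Ap lam σ * Up lam σ * Rp lam σ)
def psi (σ : Perm (Fin n)) : MP n →ₐ[ℚ] MP n := aeval fun k => X (σ k)
def phiAB (a b : Fin n) : MP n →ₐ[ℚ] MP n := aeval fun c => if c = a then X b else X c

lemma mexp_coe (lam : Fin n → ℤ) (i : Fin n) : (mexp lam i : ℤ) = lam i + Mc lam := by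
  have h : 0 ≤ lam i + Mc lam := by
    have h1 : -lam i ≤ |lam i| := neg_le_abs _
    have h2 : |lam i| ≤ Mc lam := Finset.single_le_sum (f := fun j => |lam j|)
      (fun j _ => abs_nonneg _) (mem_univ i)
    omega
  exact Int.toNat_of_nonneg h

lemma mem_pairs {q : Fin n × Fin n} : q ∈ Pairs n ↔ q.1 < q.2 := by
  simp [Pairs]

lemma mem_PS {lam : Fin n → ℤ} {p : Fin n × Fin n} :
    p ∈ PS lam ↔ p.1 < p.2 ∧ lam p.2 < lam p.1 := by simp [PS]

lemma srt_mem_pairs (σ : Perm (Fin n)) {q : Fin n × Fin n} (h : q.1 ≠ q.2) :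
    srt σ q ∈ Pairs n := by
  have : σ q.1 ≠ σ q.2 := fun hc => h (σ.injective hc)
  rw [mem_pairs, srt]
  split
  · assumption
  · exact lt_of_le_of_ne (not_lt.mp (by assumption)) (Ne.symm this)

lemma srt_srt (τ σ : Perm (Fin n)) (q : Fin n × Fin n) :
    srt τ (srt σ q) = srt (τ * σ) q := by
  unfold srt
  rw [Perm.mul_apply, Perm.mul_apply]
  rcases lt_trichotomy (σ q.1) (σ q.2) with h | h | h
  · simp [h, Perm.mul_apply]
  · have : q.1 = q.2 := σ.injective h
    simp [this, Perm.mul_apply, h]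
  · simp only [h.not_gt, if_false, Perm.mul_apply]
    rcases lt_trichotomy (τ (σ q.1)) (τ (σ q.2)) with h2 | h2 | h2
    · simp [h2, h2.not_gt]
    · exact absurd (τ.injective h2) h.ne'
    · simp [h2, h2.not_gt]

lemma srt_inj (σ : Perm (Fin n)) {p p' : Fin n × Fin n}
    (hp : p.1 < p.2) (hp' : p'.1 < p'.2) (h : srt σ p = srt σ p') : p = p' := by
  unfold srt at h
  have h1 : σ p.1 ≠ σ p.2 := fun hc => hp.ne (σ.injective hc)
  have h2 : σ p'.1 ≠ σ p'.2 := fun hc => hp'.ne (σ.injective hc)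
  split_ifs at h with ha hb hb <;>
    (obtain ⟨e1, e2⟩ := Prod.mk.injEq .. ▸ h
     have f1 := σ.injective e1
     have f2 := σ.injective e2
     have g1 : p.1 ≤ p.2 := hp.le
     have g2 : p'.1 ≤ p'.2 := hp'.le
     refine Prod.ext ?_ ?_ <;> omega)


lemma srt_one {q : Fin n × Fin n} (h : q.1 < q.2) : srt 1 q = q := by
  simp [srt, h]

/-- Product over `Pairs` as a double product. -/
lemma prod_pairs_eq {M : Type*} [CommMonoid M] (f : Fin n → Fin n → M) :
    ∏ q ∈ Pairs n, f q.1 q.2 = ∏ i, ∏ j ∈ Ioi i, f i j := by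
  rw [Finset.prod_sigma']
  refine Finset.prod_bij (fun (q : Fin n × Fin n) _ => (⟨q.1, q.2⟩ : Σ _ : Fin n, Fin n)) ?_ ?_ ?_ ?_
  · intro q hq
    simpa [Finset.mem_sigma, Finset.mem_Ioi] using mem_pairs.mp hq
  · intro q h1 q' h2 h
    obtain ⟨ha, hb⟩ := Sigma.mk.inj_iff.mp h
    exact Prod.ext ha (by simpa using hb)
  · rintro ⟨i, j⟩ hm
    simp only [Finset.mem_sigma, Finset.mem_univ, true_and, Finset.mem_Ioi] at hm
    exact ⟨(i, j), mem_pairs.mpr hm, rfl⟩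
  · intros; rfl

/-- Reindexing a product over `Pairs` by `srt τ`. -/
lemma prod_pairs_srt {M : Type*} [CommMonoid M] (τ : Perm (Fin n)) (f : Fin n × Fin n → M) :
    ∏ q ∈ Pairs n, f (srt τ q) = ∏ q ∈ Pairs n, f q := by
  refine Finset.prod_nbij' (srt τ) (srt τ⁻¹) ?_ ?_ ?_ ?_ ?_
  · intro q hq; exact srt_mem_pairs τ (mem_pairs.mp hq).ne
  · intro q hq; exact srt_mem_pairs τ⁻¹ (mem_pairs.mp hq).ne
  · intro q hq; rw [srt_srt, inv_mul_cancel, srt_one (mem_pairs.mp hq)]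
  · intro q hq; rw [srt_srt, mul_inv_cancel, srt_one (mem_pairs.mp hq)]
  · intros; rfl

/-- The Vandermonde sign of a transposition. -/
lemma signA {a b : Fin n} (hab : a ≠ b) : ∏ q ∈ Pairs n, sg (swap a b) q = -1 := by
  set τ := swap a b with hτ
  set v : Fin n → ℚ := fun i => (i : ℚ) with hv
  have hvlt : ∀ {i j : Fin n}, i < j → v i < v j := by
    intro i j h
    have h' : (i : ℕ) < (j : ℕ) := h
    show ((i : ℕ) : ℚ) < ((j : ℕ) : ℚ)
    exact_mod_cast h' 
  have hD : ∏ q ∈ Pairs n, (v q.2 - v q.1) ≠ 0 := by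
    refine Finset.prod_ne_zero_iff.mpr ?_
    intro q hq
    exact sub_ne_zero_of_ne (hvlt (mem_pairs.mp hq)).ne'
  -- step 1: pointwise rewrite
  have step1 : ∏ q ∈ Pairs n, (v (τ q.2) - v (τ q.1))
      = (∏ q ∈ Pairs n, sg τ q) * ∏ q ∈ Pairs n, (v q.2 - v q.1) := by
    calc ∏ q ∈ Pairs n, (v (τ q.2) - v (τ q.1))
        = ∏ q ∈ Pairs n, (sg τ q * ((fun q : Fin n × Fin n => v q.2 - v q.1) (srt τ q))) := by
          refine Finset.prod_congr rfl ?_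
          intro q hq
          have hne : τ q.1 ≠ τ q.2 := fun hc => (mem_pairs.mp hq).ne (τ.injective hc)
          by_cases h : τ q.1 < τ q.2
          · simp [sg, srt, h]
          · have h' : τ q.2 < τ q.1 := lt_of_le_of_ne (not_lt.mp h) hne.symm
            simp only [sg, srt, h, if_false]
            ring
      _ = (∏ q ∈ Pairs n, sg τ q) * ∏ q ∈ Pairs n,
            ((fun q : Fin n × Fin n => v q.2 - v q.1) (srt τ q)) := Finset.prod_mul_distrib
      _ = (∏ q ∈ Pairs n, sg τ q) * ∏ q ∈ Pairs n, (v q.2 - v q.1) := by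
          rw [prod_pairs_srt τ (fun q : Fin n × Fin n => v q.2 - v q.1)]
  -- step 2: determinant
  have step2 : ∏ q ∈ Pairs n, (v (τ q.2) - v (τ q.1))
      = -∏ q ∈ Pairs n, (v q.2 - v q.1) := by
    have h1 : (Matrix.vandermonde (v ∘ τ)) = (Matrix.vandermonde v).submatrix τ id := by
      ext i j; simp [Matrix.vandermonde, Matrix.submatrix]
    have h2 := Matrix.det_permute τ (Matrix.vandermonde v)
    rw [← h1] at h2
    rw [Matrix.det_vandermonde, Matrix.det_vandermonde] at h2
    simp only [Function.comp_apply, hτ, Equiv.Perm.sign_swap hab, Units.val_neg, Units.val_one,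
      Int.cast_neg, Int.cast_one, neg_one_mul] at h2
    rw [prod_pairs_eq (fun i j => v (τ j) - v (τ i)), prod_pairs_eq (fun i j => v j - v i)]
    exact h2
  have h3 : (∏ q ∈ Pairs n, sg τ q) * ∏ q ∈ Pairs n, (v q.2 - v q.1)
      = (-1) * ∏ q ∈ Pairs n, (v q.2 - v q.1) := by
    rw [← step1, step2]; ring
  exact mul_right_cancel₀ hD h3


lemma PS_ne {lam : Fin n → ℤ} {p : Fin n × Fin n} (hp : p ∈ PS lam) : p.1 < p.2 :=
  (mem_PS.mp hp).1

lemma Qs_subset (lam : Fin n → ℤ) (σ : Perm (Fin n)) : Qs lam σ ⊆ Pairs n := by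
  intro q hq
  obtain ⟨p, hp, rfl⟩ := Finset.mem_image.mp hq
  exact srt_mem_pairs σ (PS_ne hp).ne

lemma prod_Qs {M : Type*} [CommMonoid M] (lam : Fin n → ℤ) (σ : Perm (Fin n))
    (f : Fin n × Fin n → M) :
    ∏ q ∈ Qs lam σ, f q = ∏ p ∈ PS lam, f (srt σ p) :=
  Finset.prod_image fun p hp p' hp' h => srt_inj σ (PS_ne hp) (PS_ne hp') h

lemma sg_mul_srt (τ σ : Perm (Fin n)) {p : Fin n × Fin n} (hp : p.1 ≠ p.2) :
    sg σ p * sg τ (srt σ p) = sg (τ * σ) p := by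
  have h1 : σ p.1 ≠ σ p.2 := fun hc => hp (σ.injective hc)
  have h2 : τ (σ p.1) ≠ τ (σ p.2) := fun hc => h1 (τ.injective hc)
  unfold sg srt
  rw [Perm.mul_apply, Perm.mul_apply]
  by_cases h : σ p.1 < σ p.2
  · simp [h, Perm.mul_apply]
  · have h' : σ p.2 < σ p.1 := lt_of_le_of_ne (not_lt.mp h) h1.symm
    simp only [h, if_false, Perm.mul_apply]
    by_cases hh : τ (σ p.1) < τ (σ p.2)
    · simp [hh, hh.not_gt, (lt_asymm hh)]
    · have hh' : τ (σ p.2) < τ (σ p.1) := lt_of_le_of_ne (not_lt.mp hh) h2.symm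
      simp [hh, hh']

lemma eps_mul (lam : Fin n → ℤ) (τ σ : Perm (Fin n)) :
    eps lam (τ * σ) = eps lam σ * ∏ q ∈ Qs lam σ, sg τ q := by
  rw [prod_Qs, eps, eps, ← Finset.prod_mul_distrib]
  refine Finset.prod_congr rfl fun p hp => ?_
  exact (sg_mul_srt τ σ (PS_ne hp).ne).symm

lemma eps_key {a b : Fin n} (hab : a ≠ b) (lam : Fin n → ℤ) (σ : Perm (Fin n)) :
    eps lam (swap a b * σ) * ∏ q ∈ Pairs n \ Qs lam σ, sg (swap a b) q = -eps lam σ := by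
  rw [eps_mul]
  have hsd := Finset.prod_sdiff (f := sg (swap a b)) (Qs_subset lam σ)
  have hsq : (∏ q ∈ Qs lam σ, sg (swap a b) q) * (∏ q ∈ Qs lam σ, sg (swap a b) q) = 1 := by
    rw [← Finset.prod_mul_distrib]
    refine Finset.prod_eq_one fun q hq => ?_
    unfold sg; split <;> norm_num
  calc eps lam σ * (∏ q ∈ Qs lam σ, sg (swap a b) q) * ∏ q ∈ Pairs n \ Qs lam σ, sg (swap a b) q
      = eps lam σ * ((∏ q ∈ Pairs n \ Qs lam σ, sg (swap a b) q) *
          (∏ q ∈ Qs lam σ, sg (swap a b) q)) := by ring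
    _ = eps lam σ * ∏ q ∈ Pairs n, sg (swap a b) q := by rw [hsd]
    _ = -eps lam σ := by rw [signA hab]; ring

lemma eps_sq (lam : Fin n → ℤ) (σ : Perm (Fin n)) : eps lam σ * eps lam σ = 1 := by
  rw [eps, ← Finset.prod_mul_distrib]
  refine Finset.prod_eq_one fun q hq => ?_
  unfold sg; split <;> norm_num

/-- F1: the fundamental factorization of the Vandermonde `Dl`. -/
lemma Dl_factor (lam : Fin n → ℤ) (σ : Perm (Fin n)) :
    C (eps lam σ) * Wp lam σ * Rp lam σ = Dl n := by
  have h1 : (C (eps lam σ) : MP n) * Wp lam σ = ∏ q ∈ Qs lam σ, Lq q := by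
    rw [prod_Qs, eps, Wp, map_prod, ← Finset.prod_mul_distrib]
    refine Finset.prod_congr rfl fun p hp => ?_
    unfold sg srt Lq
    by_cases h : σ p.1 < σ p.2
    · simp [h]
    · simp only [h, if_false, map_neg, map_one]
      ring
  rw [h1, Rp, Dl, ← Finset.prod_sdiff (Qs_subset lam σ), mul_comm]

lemma psi_X (σ : Perm (Fin n)) (k : Fin n) : psi σ (X k) = X (σ k) := aeval_X _ _

lemma psi_C (σ : Perm (Fin n)) (r : ℚ) : psi σ (C r) = C r := by
  rw [← MvPolynomial.algebraMap_eq]; exact AlgHom.commutes _ r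

lemma psi_psi (τ σ : Perm (Fin n)) (f : MP n) : psi τ (psi σ f) = psi (τ * σ) f := by
  have h : (psi τ).comp (psi σ) = psi (τ * σ) := by
    rw [psi, psi, comp_aeval]
    refine congrArg _ (funext fun k => ?_)
    rw [aeval_X, Perm.mul_apply]
  exact congrFun (congrArg (DFunLike.coe) h) f

lemma psi_one (f : MP n) : psi 1 f = f := by
  simp [psi, aeval_X_left_apply]

lemma Lq_srt (τ : Perm (Fin n)) (q : Fin n × Fin n) :
    Lq (srt τ q) = C (sg τ q) * (X (τ q.1) - X (τ q.2)) := by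
  unfold Lq srt sg
  split <;> simp <;> ring

lemma psi_Lq (τ : Perm (Fin n)) (q : Fin n × Fin n) :
    psi τ (Lq q) = C (sg τ q) * Lq (srt τ q) := by
  have h : (C (sg τ q) : MP n) * C (sg τ q) = 1 := by
    rw [← map_mul]; unfold sg; split <;> norm_num
  rw [Lq_srt, ← mul_assoc, h, one_mul, Lq, map_sub, psi_X, psi_X]

lemma Ap_psi (lam : Fin n → ℤ) (τ σ : Perm (Fin n)) :
    psi τ (Ap lam σ) = Ap lam (τ * σ) := by
  rw [Ap, map_prod, Ap]
  exact Finset.prod_congr rfl fun i _ => by rw [map_pow, psi_X, Perm.mul_apply]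

lemma Up_psi (lam : Fin n → ℤ) (τ σ : Perm (Fin n)) :
    psi τ (Up lam σ) = Up lam (τ * σ) := by
  rw [Up, map_prod, Up]
  exact Finset.prod_congr rfl fun p _ => by rw [map_add, psi_X, psi_X, Perm.mul_apply,
    Perm.mul_apply]

/-- Reindexing the complement product. -/
lemma prod_compl_srt {M : Type*} [CommMonoid M] (lam : Fin n → ℤ) (τ σ : Perm (Fin n))
    (f : Fin n × Fin n → M) :
    ∏ q ∈ Pairs n \ Qs lam (τ * σ), f q = ∏ q ∈ Pairs n \ Qs lam σ, f (srt τ q) := by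
  refine Finset.prod_nbij' (srt τ⁻¹) (srt τ) ?_ ?_ ?_ ?_ ?_
  · intro q hq
    obtain ⟨hq1, hq2⟩ := Finset.mem_sdiff.mp hq
    refine Finset.mem_sdiff.mpr ⟨srt_mem_pairs _ (mem_pairs.mp hq1).ne, fun hc => ?_⟩
    obtain ⟨p, hp, hps⟩ := Finset.mem_image.mp hc
    apply hq2
    refine Finset.mem_image.mpr ⟨p, hp, ?_⟩
    have h2 := congrArg (srt τ) hps.symm
    rw [srt_srt, srt_srt, mul_inv_cancel, srt_one (mem_pairs.mp hq1)] at h2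
    exact h2.symm
  · intro q hq
    obtain ⟨hq1, hq2⟩ := Finset.mem_sdiff.mp hq
    refine Finset.mem_sdiff.mpr ⟨srt_mem_pairs _ (mem_pairs.mp hq1).ne, fun hc => ?_⟩
    obtain ⟨p, hp, hps⟩ := Finset.mem_image.mp hc
    apply hq2
    refine Finset.mem_image.mpr ⟨p, hp, ?_⟩
    have h2 := congrArg (srt τ⁻¹) hps.symm
    rw [srt_srt, srt_srt, inv_mul_cancel, srt_one (mem_pairs.mp hq1),
      inv_mul_cancel_left] at h2
    exact h2.symm
  · intro q hq
    rw [srt_srt, mul_inv_cancel, srt_one (mem_pairs.mp (Finset.mem_sdiff.mp hq).1)]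
  · intro q hq
    rw [srt_srt, inv_mul_cancel, srt_one (mem_pairs.mp (Finset.mem_sdiff.mp hq).1)]
  · intro q hq
    rw [srt_srt, mul_inv_cancel, srt_one (mem_pairs.mp (Finset.mem_sdiff.mp hq).1)]

lemma Rp_psi (lam : Fin n → ℤ) (τ σ : Perm (Fin n)) :
    psi τ (Rp lam σ) = C (∏ q ∈ Pairs n \ Qs lam σ, sg τ q) * Rp lam (τ * σ) := by
  rw [Rp, map_prod, Rp, prod_compl_srt lam τ σ Lq]
  rw [map_prod, ← Finset.prod_mul_distrib]
  exact Finset.prod_congr rfl fun q _ => psi_Lq τ q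

/-- `Np` is alternating under transpositions. -/
lemma Np_psi_swap (lam : Fin n → ℤ) {a b : Fin n} (hab : a ≠ b) :
    psi (swap a b) (Np lam) = -Np lam := by
  set τ := swap a b with hτ
  have key : ∀ σ : Perm (Fin n),
      psi τ (C (eps lam σ) * (Ap lam σ * Up lam σ * Rp lam σ))
      = -(C (eps lam (τ * σ)) * (Ap lam (τ * σ) * Up lam (τ * σ) * Rp lam (τ * σ))) := by
    intro σ
    rw [map_mul, map_mul, map_mul, psi_C, Ap_psi, Up_psi, Rp_psi]
    have h1 : eps lam σ * (∏ q ∈ Pairs n \ Qs lam σ, sg τ q) = -eps lam (τ * σ) := by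
      have h2 := eps_key hab lam σ
      have h3 := eps_sq lam (τ * σ)
      have h4 := eps_sq lam σ
      rw [← hτ] at h2
      linear_combination (eps lam σ * eps lam (τ * σ)) * h2
        - (eps lam σ * (∏ q ∈ Pairs n \ Qs lam σ, sg τ q)) * h3
        - eps lam (τ * σ) * h4
    calc C (eps lam σ) * (Ap lam (τ * σ) * Up lam (τ * σ) *
            (C (∏ q ∈ Pairs n \ Qs lam σ, sg τ q) * Rp lam (τ * σ)))
        = C (eps lam σ * ∏ q ∈ Pairs n \ Qs lam σ, sg τ q) *
            (Ap lam (τ * σ) * Up lam (τ * σ) * Rp lam (τ * σ)) := by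
          rw [map_mul]; ring
      _ = -(C (eps lam (τ * σ)) * (Ap lam (τ * σ) * Up lam (τ * σ) * Rp lam (τ * σ))) := by
          rw [h1, map_neg]; ring
  simp only [Np, map_sum]
  rw [Finset.sum_congr rfl fun σ _ => key σ]
  rw [show (∑ σ : Perm (Fin n), -(C (eps lam (swap a b * σ)) *
      (Ap lam (swap a b * σ) * Up lam (swap a b * σ) * Rp lam (swap a b * σ))))
    = -(∑ σ : Perm (Fin n), C (eps lam (swap a b * σ)) *
      (Ap lam (swap a b * σ) * Up lam (swap a b * σ) * Rp lam (swap a b * σ))) from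
    (Finset.sum_neg_distrib _)]
  refine congrArg _ ?_
  exact Fintype.sum_equiv (Equiv.mulLeft τ) _ _ fun σ => rfl

lemma Dl_psi_swap {a b : Fin n} (hab : a ≠ b) :
    psi (swap a b) (Dl n) = -Dl n := by
  rw [Dl, map_prod]
  rw [Finset.prod_congr rfl fun q (_ : q ∈ Pairs n) => psi_Lq (swap a b) q]
  rw [Finset.prod_mul_distrib, ← map_prod, signA hab]
  rw [prod_pairs_srt (swap a b) Lq, ← Dl]
  simp

lemma psi_alternating {g : MP n} (hg : ∀ a b : Fin n, a ≠ b → psi (swap a b) g = -g)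
    (σ : Perm (Fin n)) : psi σ g = C ((Perm.sign σ : ℤ) : ℚ) * g := by
  refine Equiv.Perm.swap_induction_on σ ?_ ?_
  · rw [psi_one]; simp
  · intro f x y hxy ih
    rw [← psi_psi, ih, map_mul, psi_C, hg x y hxy]
    rw [Equiv.Perm.sign_mul, Equiv.Perm.sign_swap hxy]
    push_cast
    rw [neg_one_mul, map_neg]
    ring

lemma phi_X (a b c : Fin n) : phiAB a b (X c) = if c = a then X b else X c := aeval_X _ _

lemma phi_C (a b : Fin n) (r : ℚ) : phiAB a b (C r) = C r := by
  rw [← MvPolynomial.algebraMap_eq]; exact AlgHom.commutes _ r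

lemma phi_X_swap {a b : Fin n} (hab : a ≠ b) (c : Fin n) :
    phiAB a b (X (swap a b c)) = phiAB a b (X c) := by
  rcases eq_or_ne c a with rfl | hca
  · rw [swap_apply_left, phi_X, phi_X, if_neg hab.symm, if_pos rfl]
  · rcases eq_or_ne c b with rfl | hcb
    · rw [swap_apply_right, phi_X, phi_X, if_pos rfl, if_neg hab.symm]
    · rw [swap_apply_of_ne_of_ne hca hcb]

lemma phi_sub_dvd (a b : Fin n) (f : MP n) : (X a - X b) ∣ f - phiAB a b f := by
  induction f using MvPolynomial.induction_on with
  | C r =>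
    rw [← MvPolynomial.algebraMap_eq, AlgHom.commutes, sub_self]
    exact dvd_zero _
  | add p q hp hq =>
    rw [map_add]
    have : p + q - (phiAB a b p + phiAB a b q) = (p - phiAB a b p) + (q - phiAB a b q) := by ring
    rw [this]
    exact dvd_add hp hq
  | mul_X p i hp =>
    rw [map_mul, phi_X]
    have h1 : p * X i - phiAB a b p * (if i = a then X b else X i)
        = (p - phiAB a b p) * X i + phiAB a b p * (X i - if i = a then X b else X i) := by ring
    rw [h1]
    refine dvd_add (Dvd.dvd.mul_right hp _) (Dvd.dvd.mul_left ?_ _)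
    split
    · subst ‹i = a›; exact dvd_refl _
    · simp

lemma phi_Np {a b : Fin n} (hab : a ≠ b) (lam : Fin n → ℤ) : phiAB a b (Np lam) = 0 := by
  set τ := swap a b with hτ
  set φ := phiAB a b with hφ
  have key : ∀ σ : Perm (Fin n),
      φ (C (eps lam (τ * σ)) * (Ap lam (τ * σ) * Up lam (τ * σ) * Rp lam (τ * σ)))
      = -φ (C (eps lam σ) * (Ap lam σ * Up lam σ * Rp lam σ)) := by
    intro σ
    have hA : φ (Ap lam (τ * σ)) = φ (Ap lam σ) := by
      rw [Ap, Ap, map_prod, map_prod]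
      exact Finset.prod_congr rfl fun i _ => by
        rw [map_pow, map_pow, Perm.mul_apply]
        rw [show φ (X (τ (σ i))) = φ (X (σ i)) from phi_X_swap hab (σ i)]
    have hU : φ (Up lam (τ * σ)) = φ (Up lam σ) := by
      rw [Up, Up, map_prod, map_prod]
      exact Finset.prod_congr rfl fun p _ => by
        rw [map_add, map_add, Perm.mul_apply, Perm.mul_apply,
          show φ (X (τ (σ p.1))) = φ (X (σ p.1)) from phi_X_swap hab (σ p.1),
          show φ (X (τ (σ p.2))) = φ (X (σ p.2)) from phi_X_swap hab (σ p.2)]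
    have hR : φ (Rp lam (τ * σ)) = C (∏ q ∈ Pairs n \ Qs lam σ, sg τ q) * φ (Rp lam σ) := by
      rw [Rp, prod_compl_srt lam τ σ Lq, map_prod]
      rw [Finset.prod_congr rfl fun q (_ : q ∈ Pairs n \ Qs lam σ) =>
        congrArg φ (Lq_srt τ q)]
      rw [Finset.prod_congr rfl fun q (_ : q ∈ Pairs n \ Qs lam σ) => map_mul φ _ _]
      rw [Finset.prod_mul_distrib]
      refine congrArg₂ _ ?_ ?_
      · rw [Finset.prod_congr rfl fun q (_ : q ∈ Pairs n \ Qs lam σ) => phi_C a b (sg τ q),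
          ← map_prod]
      · rw [Rp, map_prod]
        refine Finset.prod_congr rfl fun q hq => ?_
        rw [Lq, map_sub, map_sub, phi_X_swap hab q.1, phi_X_swap hab q.2]
    have heps : eps lam (τ * σ) * (∏ q ∈ Pairs n \ Qs lam σ, sg τ q) = -eps lam σ := by
      have := eps_key hab lam σ
      rwa [← hτ] at this
    simp only [map_mul]
    rw [show φ = phiAB a b from rfl] at hA hU hR ⊢
    simp only [phi_C]
    rw [hA, hU, hR]
    calc C (eps lam (τ * σ)) * (phiAB a b (Ap lam σ) * phiAB a b (Up lam σ) *
            (C (∏ q ∈ Pairs n \ Qs lam σ, sg τ q) * phiAB a b (Rp lam σ)))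
        = C (eps lam (τ * σ) * ∏ q ∈ Pairs n \ Qs lam σ, sg τ q) *
            (phiAB a b (Ap lam σ) * (phiAB a b (Up lam σ) * phiAB a b (Rp lam σ))) := by
          rw [map_mul]; ring
      _ = -(C (eps lam σ) * (phiAB a b (Ap lam σ) * phiAB a b (Up lam σ) *
            phiAB a b (Rp lam σ))) := by
          rw [heps, map_neg]; ring
  have hS : φ (Np lam) = -φ (Np lam) := by
    conv_lhs => rw [Np, map_sum]
    rw [show (∑ σ : Perm (Fin n), φ (C (eps lam σ) * (Ap lam σ * Up lam σ * Rp lam σ)))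
        = ∑ σ : Perm (Fin n), φ (C (eps lam (τ * σ)) *
          (Ap lam (τ * σ) * Up lam (τ * σ) * Rp lam (τ * σ))) from
      (Fintype.sum_equiv (Equiv.mulLeft τ) _ _ fun σ => rfl).symm]
    rw [Finset.sum_congr rfl fun σ _ => key σ, Finset.sum_neg_distrib]
    rw [Np, map_sum]
  have h2 : φ (Np lam) + φ (Np lam) = 0 := by
    nth_rewrite 1 [hS]
    ring
  have h3 : (2 : MP n) * φ (Np lam) = 0 := by rw [two_mul]; exact h2
  exact (mul_eq_zero.mp h3).resolve_left (by norm_num)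

lemma sub_dvd_Np {a b : Fin n} (hab : a ≠ b) (lam : Fin n → ℤ) :
    (X a - X b) ∣ Np lam := by
  have h := phi_sub_dvd a b (Np lam)
  rwa [phi_Np hab, sub_zero] at h

lemma prime_X_mp (a : Fin n) : Prime (X a : MP n) := by
  have h1 : (X a : MP n) = rename (Subtype.val : ({a} : Set (Fin n)) → Fin n)
      (X ⟨a, rfl⟩) := (rename_X (Subtype.val : ({a} : Set (Fin n)) → Fin n) ⟨a, rfl⟩).symm
  rw [h1, prime_rename_iff]
  set e : MvPolynomial ({a} : Set (Fin n)) ℚ ≃ₐ[ℚ] Polynomial ℚ :=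
    (renameEquiv ℚ (Equiv.equivPUnit.{1,1} ({a} : Set (Fin n)))).trans (pUnitAlgEquiv ℚ) with he
  rw [← MulEquiv.prime_iff e.toMulEquiv]
  have h2 : e (X ⟨a, rfl⟩) = Polynomial.X := by
    rw [he]
    simp [renameEquiv_apply, rename_X]
  rw [show e.toMulEquiv (X ⟨a, rfl⟩) = e (X ⟨a, rfl⟩) from rfl, h2]
  exact Polynomial.prime_X

/-- The linear form `X a - X b` is prime. -/
lemma prime_sub {a b : Fin n} (hab : a ≠ b) : Prime (X a - X b : MP n) := by
  set f : Fin n → MP n := fun c => if c = a then X a - X b else X c with hf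
  set g : Fin n → MP n := fun c => if c = a then X a + X b else X c with hg
  have hcomp1 : (aeval f).comp (aeval g) = AlgHom.id ℚ (MP n) := by
    refine MvPolynomial.algHom_ext fun c => ?_
    simp only [AlgHom.comp_apply, aeval_X, AlgHom.id_apply]
    rcases eq_or_ne c a with rfl | hc
    · simp [hg, hf, map_add, aeval_X, if_neg hab.symm]
    · simp [hg, hf, if_neg hc, aeval_X]
  have hcomp2 : (aeval g).comp (aeval f) = AlgHom.id ℚ (MP n) := by
    refine MvPolynomial.algHom_ext fun c => ?_
    simp only [AlgHom.comp_apply, aeval_X, AlgHom.id_apply]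
    rcases eq_or_ne c a with rfl | hc
    · simp [hg, hf, map_sub, aeval_X, if_neg hab.symm]
    · simp [hg, hf, if_neg hc, aeval_X]
  let E : MP n ≃ₐ[ℚ] MP n := AlgEquiv.ofAlgHom (aeval f) (aeval g) hcomp1 hcomp2
  have h3 : E (X a) = X a - X b := by
    show aeval f (X a) = X a - X b
    rw [aeval_X, hf]
    simp
  exact h3 ▸ ((MulEquiv.prime_iff E).mpr (prime_X_mp a))

lemma Lq_ne_zero {q : Fin n × Fin n} (hq : q.1 ≠ q.2) : (Lq q : MP n) ≠ 0 := by
  intro h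
  have h2 := congrArg (aeval (fun k : Fin n => if k = q.1 then (1 : ℚ) else 0)) h
  rw [Lq, map_sub, aeval_X, aeval_X, map_zero] at h2
  simp [if_neg (Ne.symm hq)] at h2

lemma Lq_not_dvd {q q' : Fin n × Fin n} (hq : q ∈ Pairs n) (hq' : q' ∈ Pairs n)
    (hne : q ≠ q') : ¬ (Lq q : MP n) ∣ Lq q' := by
  intro hdvd
  have h1 : q.1 < q.2 := mem_pairs.mp hq
  have h2 : q'.1 < q'.2 := mem_pairs.mp hq'
  -- at most one of q'.1, q'.2 lies in {q.1, q.2}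
  have hnot : ¬ ((q'.1 = q.1 ∨ q'.1 = q.2) ∧ (q'.2 = q.1 ∨ q'.2 = q.2)) := by
    rintro ⟨ha | ha, hb | hb⟩ <;> (apply hne; apply Prod.ext <;> omega) <;> omega
  set y : Fin n → ℚ := fun k => if k = q.1 ∨ k = q.2 then 0 else ((k : ℕ) : ℚ) + 1 with hy
  obtain ⟨u, hu⟩ := hdvd
  have h3 := congrArg (aeval y) hu
  simp only [Lq, map_sub, map_mul, aeval_X] at h3
  have hyq : y q.1 - y q.2 = 0 := by simp [hy]
  rw [hyq, zero_mul, sub_eq_zero] at h3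
  -- h3 : y q'.1 = y q'.2
  have hpos : ∀ k : Fin n, ¬ (k = q.1 ∨ k = q.2) → y k ≠ 0 := by
    intro k hk
    rw [hy]
    simp only [hk, if_false]
    positivity
  by_cases c1 : q'.1 = q.1 ∨ q'.1 = q.2 <;> by_cases c2 : q'.2 = q.1 ∨ q'.2 = q.2
  · exact hnot ⟨c1, c2⟩
  · rw [hy] at h3
    simp only [c1, if_true, c2, if_false] at h3
    have := hpos q'.2 c2
    rw [hy] at this
    simp only [c2, if_false] at this
    exact this h3.symm
  · rw [hy] at h3
    simp only [c1, if_false, c2, if_true] at h3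
    have := hpos q'.1 c1
    rw [hy] at this
    simp only [c1, if_false] at this
    exact this h3
  · rw [hy] at h3
    simp only [c1, if_false, c2, if_false] at h3
    have : ((q'.1 : ℕ) : ℚ) = ((q'.2 : ℕ) : ℚ) := by linarith
    have h4 : (q'.1 : ℕ) = (q'.2 : ℕ) := Nat.cast_injective this
    omega

/-- The Vandermonde product divides `Np`. -/
lemma Dl_dvd_Np (lam : Fin n → ℤ) : Dl n ∣ Np lam := by
  rw [Dl]
  have key : ∀ s : Finset (Fin n × Fin n), s ⊆ Pairs n → (∏ q ∈ s, Lq q) ∣ Np lam := by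
    intro s
    induction s using Finset.induction_on with
    | empty => intro _; simpa using dvd_refl (Np lam)
    | @insert q s hq ih =>
      intro hsub
      have hqP : q ∈ Pairs n := hsub (Finset.mem_insert_self q s)
      have hsP : s ⊆ Pairs n := fun r hr => hsub (Finset.mem_insert_of_mem hr)
      have hprime : Prime (Lq q : MP n) := prime_sub (mem_pairs.mp hqP).ne
      have hdvd1 : (Lq q : MP n) ∣ Np lam := sub_dvd_Np (mem_pairs.mp hqP).ne lam
      obtain ⟨k, hk⟩ := ih hsP
      have hnd : ¬ (Lq q : MP n) ∣ ∏ r ∈ s, Lq r := by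
        intro hd
        obtain ⟨r, hr, hdr⟩ := hprime.exists_mem_finset_dvd hd
        exact Lq_not_dvd hqP (hsP hr) (fun hE => hq (hE ▸ hr)) hdr
      have hdk : (Lq q : MP n) ∣ k := by
        have : (Lq q : MP n) ∣ (∏ r ∈ s, Lq r) * k := hk ▸ hdvd1
        exact (hprime.dvd_or_dvd this).resolve_left hnd
      obtain ⟨k2, hk2⟩ := hdk
      rw [Finset.prod_insert hq, hk, hk2]
      ring_nf
      exact Dvd.intro _ rfl
  exact key (Pairs n) le_rfl

lemma Dl_ne_zero : (Dl n : MP n) ≠ 0 := by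
  rw [Dl]
  exact Finset.prod_ne_zero_iff.mpr fun q hq => Lq_ne_zero (mem_pairs.mp hq).ne

lemma sign_cast_ne_zero (σ : Perm (Fin n)) : ((Perm.sign σ : ℤ) : ℚ) ≠ 0 := by
  rcases Int.units_eq_one_or (Perm.sign σ) with h | h <;> rw [h] <;> norm_num

/-- The symmetric quotient `NN = Np / Dl`. -/
def NN (lam : Fin n → ℤ) : MP n := (Dl_dvd_Np lam).choose

lemma NN_spec (lam : Fin n → ℤ) : Np lam = Dl n * NN lam := (Dl_dvd_Np lam).choose_spec

lemma NN_psi (lam : Fin n → ℤ) (σ : Perm (Fin n)) : psi σ (NN lam) = NN lam := by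
  have h1 := psi_alternating (fun a b hab => Np_psi_swap lam hab) σ
  have h2 := psi_alternating (fun a b hab => Dl_psi_swap hab) σ
  have h3 : psi σ (Np lam) = psi σ (Dl n) * psi σ (NN lam) := by rw [← map_mul, ← NN_spec]
  rw [h1, h2, NN_spec lam] at h3
  have h4 : (C ((Perm.sign σ : ℤ) : ℚ) : MP n) * Dl n ≠ 0 :=
    mul_ne_zero (fun hc => sign_cast_ne_zero σ (C_eq_zero.mp hc)) Dl_ne_zero
  have h5 : (C ((Perm.sign σ : ℤ) : ℚ) : MP n) * Dl n * psi σ (NN lam)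
      = (C ((Perm.sign σ : ℤ) : ℚ) : MP n) * Dl n * NN lam := by
    rw [← h3]; ring
  exact mul_left_cancel₀ h4 h5

/-- The character of the Laurent evaluation. -/
def chiH (x : Fin n → ℚˣ) : Multiplicative (Fin n →₀ ℤ) →* ℚ where
  toFun d := ∏ i, ((x i ^ ((Multiplicative.toAdd d) i) : ℚˣ) : ℚ)
  map_one' := by
    simp
  map_mul' d e := by
    simp only [toAdd_mul, Finsupp.add_apply, zpow_add, Units.val_mul]
    exact Finset.prod_mul_distrib

def lpE (x : Fin n → ℚˣ) : LP n →ₐ[ℚ] ℚ :=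
  AddMonoidAlgebra.lift ℚ ℚ (Fin n →₀ ℤ) (chiH x)

lemma lpEval_eq (x : Fin n → ℚˣ) (f : LP n) : lpEval x f = lpE x f := by
  rw [lpE, AddMonoidAlgebra.lift_apply, lpEval]
  refine Finsupp.sum_congr fun d _ => ?_
  rw [smul_eq_mul]
  rfl

lemma lpEval_single (x : Fin n → ℚˣ) (d : Fin n →₀ ℤ) (c : ℚ) :
    lpEval x (AddMonoidAlgebra.single d c) = c * ∏ i, ((x i ^ (d i) : ℚˣ) : ℚ) := by
  rw [lpEval, AddMonoidAlgebra.coeff_single]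
  exact Finsupp.sum_single_index (by rw [zero_mul])

def iota (n : ℕ) : MP n →ₐ[ℚ] LP n := aeval fun i => Xv i

lemma lpE_iota (x : Fin n → ℚˣ) (P : MP n) :
    lpE x (iota n P) = aeval (fun i => (x i : ℚ)) P := by
  have h : (lpE x).comp (iota n) = aeval fun i => (x i : ℚ) := by
    rw [iota, comp_aeval]
    refine congrArg _ (funext fun i => ?_)
    rw [show (lpE x) (Xv i) = lpEval x (Xv i) from (lpEval_eq x _).symm, Xv, lpEval_single,
      one_mul]
    rw [Finset.prod_eq_single i (fun j _ hj => by
      rw [Finsupp.single_eq_of_ne' (Ne.symm hj), zpow_zero, Units.val_one])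
      (fun h => absurd (Finset.mem_univ i) h)]
    rw [Finsupp.single_eq_same, zpow_one]
  exact congrFun (congrArg DFunLike.coe h) P

lemma aeval_perm (y : Fin n → ℚ) (σ : Perm (Fin n)) (P : MP n) :
    aeval (fun k => y (σ k)) P = aeval y (psi σ P) := by
  have h : (aeval y).comp (psi σ) = aeval fun k => y (σ k) := by
    rw [psi, comp_aeval]
    exact congrArg _ (funext fun k => aeval_X _ _)
  rw [← h]
  rfl

lemma eps_ne_zero (lam : Fin n → ℤ) (σ : Perm (Fin n)) : eps lam σ ≠ 0 := by
  intro h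
  have := eps_sq lam σ
  rw [h, mul_zero] at this
  norm_num at this

lemma NN_eval (lam : Fin n → ℤ) (x : Fin n → ℚˣ)
    (hx : ∀ i j : Fin n, i ≠ j → (x i : ℚ) ≠ (x j : ℚ)) :
    aeval (fun i => (x i : ℚ)) (NN lam)
    = ∑ σ : Perm (Fin n),
        (aeval (fun i => (x i : ℚ)) (Ap lam σ) * aeval (fun i => (x i : ℚ)) (Up lam σ))
          / aeval (fun i => (x i : ℚ)) (Wp lam σ) := by
  set y : Fin n → ℚ := fun i => (x i : ℚ) with hy
  have hD : aeval y (Dl n) ≠ 0 := by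
    rw [Dl, map_prod]
    refine Finset.prod_ne_zero_iff.mpr fun q hq => ?_
    rw [Lq, map_sub, aeval_X, aeval_X]
    exact sub_ne_zero_of_ne (hx _ _ (mem_pairs.mp hq).ne)
  have hW : ∀ σ : Perm (Fin n), aeval y (Wp lam σ) ≠ 0 := by
    intro σ
    rw [Wp, map_prod]
    refine Finset.prod_ne_zero_iff.mpr fun p hp => ?_
    rw [map_sub, aeval_X, aeval_X]
    exact sub_ne_zero_of_ne (hx _ _ fun hc => (PS_ne hp).ne (σ.injective hc))
  have hterm : ∀ σ : Perm (Fin n),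
      eps lam σ * (aeval y (Ap lam σ) * aeval y (Up lam σ) * aeval y (Rp lam σ))
      = aeval y (Dl n) * ((aeval y (Ap lam σ) * aeval y (Up lam σ)) / aeval y (Wp lam σ)) := by
    intro σ
    have hf := congrArg (aeval y) (Dl_factor lam σ)
    rw [map_mul, map_mul, aeval_C, Algebra.algebraMap_self_apply] at hf
    rw [← hf]
    have hg := div_mul_cancel₀ ((aeval y) (Ap lam σ) * (aeval y) (Up lam σ)) (hW σ)
    calc eps lam σ * ((aeval y) (Ap lam σ) * (aeval y) (Up lam σ) * (aeval y) (Rp lam σ))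
        = ((aeval y) (Ap lam σ) * (aeval y) (Up lam σ) / (aeval y) (Wp lam σ) *
            (aeval y) (Wp lam σ)) * (eps lam σ * (aeval y) (Rp lam σ)) := by rw [hg]; ring
      _ = eps lam σ * (aeval y) (Wp lam σ) * (aeval y) (Rp lam σ) *
          ((aeval y) (Ap lam σ) * (aeval y) (Up lam σ) / (aeval y) (Wp lam σ)) := by ring
  have hNp : aeval y (Np lam) = aeval y (Dl n) * ∑ σ : Perm (Fin n),
      (aeval y (Ap lam σ) * aeval y (Up lam σ)) / aeval y (Wp lam σ) := by
    rw [Np, map_sum, Finset.mul_sum]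
    refine Finset.sum_congr rfl fun σ _ => ?_
    rw [map_mul, map_mul, map_mul, aeval_C, Algebra.algebraMap_self_apply, ← hterm σ]
  have h2 : aeval y (Np lam) = aeval y (Dl n) * aeval y (NN lam) := by
    rw [NN_spec lam, map_mul]
  exact mul_left_cancel₀ hD (h2.symm.trans hNp)

/-- The candidate Laurent polynomial. -/
def pFinal (lam : Fin n → ℤ) : LP n :=
  iota n (C ((Fintype.card {σ : Perm (Fin n) // ∀ i, lam (σ i) = lam i} : ℚ))⁻¹ * NN lam) *
    AddMonoidAlgebra.single (Finsupp.equivFunOnFinite.symm fun _ => -(Mc lam)) 1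

lemma pFinal_eval (lam : Fin n → ℤ) (x : Fin n → ℚˣ) :
    lpEval x (pFinal lam)
    = ((Fintype.card {σ : Perm (Fin n) // ∀ i, lam (σ i) = lam i} : ℚ))⁻¹ *
        aeval (fun i => (x i : ℚ)) (NN lam) *
        ∏ i, ((x i ^ (-(Mc lam)) : ℚˣ) : ℚ) := by
  rw [lpEval_eq, pFinal, map_mul, lpE_iota, map_mul, aeval_C, Algebra.algebraMap_self_apply,
    ← lpEval_eq, lpEval_single, one_mul]
  refine congrArg _ (Finset.prod_congr rfl fun i _ => ?_)
  rw [Finsupp.coe_equivFunOnFinite_symm]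

lemma pFinal_symm (lam : Fin n → ℤ) : IsSymmLP (pFinal lam) := by
  intro σ x
  rw [pFinal_eval, pFinal_eval]
  have h1 : aeval (fun i => ((x ∘ σ) i : ℚ)) (NN lam)
      = aeval (fun i => (x i : ℚ)) (NN lam) := by
    rw [show (fun i => ((x ∘ σ) i : ℚ)) = fun i => ((x (σ i)) : ℚ) from rfl]
    rw [aeval_perm (fun i => (x i : ℚ)) σ (NN lam), NN_psi]
  have h2 : (∏ i, (((x ∘ σ) i ^ (-(Mc lam)) : ℚˣ) : ℚ))
      = ∏ i, ((x i ^ (-(Mc lam)) : ℚˣ) : ℚ) :=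
    Equiv.prod_comp σ fun i => ((x i ^ (-(Mc lam)) : ℚˣ) : ℚ)
  rw [h1, h2]

lemma pFinal_agrees (lam : Fin n → ℤ) (x : Fin n → ℚˣ)
    (hx : ∀ i j : Fin n, i ≠ j → (x i : ℚ) ≠ (x j : ℚ)) :
    lpEval x (pFinal lam) = schurPVal n lam x := by
  rw [pFinal_eval, NN_eval lam x hx, schurPVal]
  rw [show Finset.univ.filter (fun p : Fin n × Fin n => p.1 < p.2 ∧ lam p.2 < lam p.1)
    = PS lam from rfl]
  rw [mul_assoc]
  refine congrArg _ ?_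
  rw [Finset.sum_mul]
  refine Finset.sum_congr rfl fun σ _ => ?_
  set y : Fin n → ℚ := fun i => (x i : ℚ) with hy
  set K : ℚ := ∏ i, ((x i ^ (-(Mc lam)) : ℚˣ) : ℚ) with hK
  have hA : aeval y (Ap lam σ) = ∏ i, y (σ i) ^ mexp lam i := by
    rw [Ap, map_prod]
    exact Finset.prod_congr rfl fun i _ => by rw [map_pow, aeval_X]
  have hu : ∀ i, y (σ i) ^ mexp lam i * ((x (σ i) ^ (-(Mc lam)) : ℚˣ) : ℚ)
      = ((x (σ i) ^ lam i : ℚˣ) : ℚ) := by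
    intro i
    have h1 : y (σ i) ^ mexp lam i = ((x (σ i) ^ (mexp lam i : ℤ) : ℚˣ) : ℚ) := by
      rw [zpow_natCast, Units.val_pow_eq_pow_val]
    rw [h1, ← Units.val_mul, ← zpow_add]
    have h2 : (mexp lam i : ℤ) + -(Mc lam) = lam i := by
      have := mexp_coe lam i
      omega
    rw [h2]
  have hKs : K = ∏ i, ((x (σ i) ^ (-(Mc lam)) : ℚˣ) : ℚ) :=
    (Equiv.prod_comp σ fun i => ((x i ^ (-(Mc lam)) : ℚˣ) : ℚ)).symm
  have hAK : aeval y (Ap lam σ) * K = ∏ i, ((x (σ i) ^ lam i : ℚˣ) : ℚ) := by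
    rw [hA, hKs, ← Finset.prod_mul_distrib]
    exact Finset.prod_congr rfl fun i _ => hu i
  have hUW : aeval y (Up lam σ) / aeval y (Wp lam σ)
      = ∏ p ∈ PS lam, (1 + ((x (σ p.1) : ℚ))⁻¹ * (x (σ p.2) : ℚ)) /
          (1 - ((x (σ p.1) : ℚ))⁻¹ * (x (σ p.2) : ℚ)) := by
    rw [Up, Wp, map_prod, map_prod, ← Finset.prod_div_distrib]
    refine Finset.prod_congr rfl fun p hp => ?_
    rw [map_add, map_sub, aeval_X, aeval_X]
    have hu0 : (x (σ p.1) : ℚ) ≠ 0 := Units.ne_zero _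
    have huv : (x (σ p.1) : ℚ) ≠ (x (σ p.2) : ℚ) :=
      hx _ _ fun hc => (PS_ne hp).ne (σ.injective hc)
    have hd : 1 - ((x (σ p.1) : ℚ))⁻¹ * (x (σ p.2) : ℚ) ≠ 0 := by
      intro h
      apply huv
      have h3 := sub_eq_zero.mp h
      field_simp at h3
      exact h3
    show ((x (σ p.1) : ℚ) + (x (σ p.2) : ℚ)) / ((x (σ p.1) : ℚ) - (x (σ p.2) : ℚ)) = _
    rw [div_eq_div_iff (sub_ne_zero_of_ne huv) hd]
    field_simp
  calc aeval y (Ap lam σ) * aeval y (Up lam σ) / aeval y (Wp lam σ) * K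
      = (aeval y (Ap lam σ) * K) * (aeval y (Up lam σ) / aeval y (Wp lam σ)) := by ring
    _ = _ := by rw [hAK, hUW]

end
end SchurPAux

/-- For λ ∈ ℤⁿ weakly decreasing with λᵢ = λⱼ (i<j) forcing
λᵢ = 0, the Schur P-function p_{λ,n} is an Sₙ-invariant Laurent polynomial:
there is a symmetric Laurent polynomial whose values agree with the defining
rational expression wherever the denominators do not vanish (all coordinates
distinct); in particular all denominators cancel. -/
theorem schurP_is_symmetric_laurent (n : ℕ) (lam : Fin n → ℤ)
    (hdec : ∀ i j : Fin n, i ≤ j → lam j ≤ lam i)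
    (hstrict : ∀ i j : Fin n, i < j → lam i = lam j → lam i = 0) :
    ∃ p : LP n, IsSymmLP p ∧
      ∀ x : Fin n → ℚˣ, (∀ i j : Fin n, i ≠ j → (x i : ℚ) ≠ (x j : ℚ)) →
        lpEval x p = schurPVal n lam x :=
  ⟨SchurPAux.pFinal lam, SchurPAux.pFinal_symm lam,
    fun x hx => SchurPAux.pFinal_agrees lam x hx⟩
end
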